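/- Let G have maximum degree Δ and let P* be an optimal (minimum-cost, shortcut-free) s–t secluded path. If u and v are two vertices on P* that share a common neighbor in G, then the distance between u and v along the path P* is at most Δ + 1. -/

import Mathlib

open Finset

/-- The closed neighborhood of a set `S` of vertices. -/
def nbhd {V : Type*} [Fintype V] [DecidableEq V] (G : SimpleGraph V) [DecidableRel G.Adj]
    (S : Finset V) : Finset V :=
  S ∪ univ.filter (fun v => ∃ u ∈ S, G.Adj u v)

/-- The exposure cost of a walk. -/
def wcost {V : Type*} [Fintype V] [DecidableEq V] (G : SimpleGraph V) [DecidableRel G.Adj]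
    {s t : V} (p : G.Walk s t) : ℕ :=
  (nbhd G p.support.toFinset).card

section Helpers

variable {V : Type*} {G : SimpleGraph V}

namespace SimpleGraph.Walk

lemma support_getElem_eq_getVert' :
    ∀ {s t : V} (p : G.Walk s t) (k : ℕ) (h : k < p.support.length),
      p.support[k] = p.getVert k
  | _, _, .nil, 0, _ => rfl
  | _, _, .cons _ _, 0, _ => rfl
  | _, _, .cons h q, (k+1), hk => by
      simpa [SimpleGraph.Walk.getVert_cons_succ] using
        support_getElem_eq_getVert' q k (by simp at hk ⊢; omega)

variable [DecidableEq V] {s t : V}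

lemma indexOf_getVert (p : G.Walk s t) (hp : p.IsPath) {k : ℕ} (hk : k ≤ p.length) :
    p.support.idxOf (p.getVert k) = k := by
  have h : k < p.support.length := by rw [p.length_support]; omega
  rw [← p.support_getElem_eq_getVert' k h]
  exact List.Nodup.idxOf_getElem hp.support_nodup k h

lemma getVert_indexOf (p : G.Walk s t) {a : V} (ha : a ∈ p.support) :
    p.getVert (p.support.idxOf a) = a := by
  have h : p.support.idxOf a < p.support.length := List.idxOf_lt_length_iff.2 ha
  rw [← p.support_getElem_eq_getVert' _ h]
  exact List.getElem_idxOf h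

lemma indexOf_mem_le_length (p : G.Walk s t) {a : V} (ha : a ∈ p.support) :
    p.support.idxOf a ≤ p.length := by
  have h : p.support.idxOf a < p.support.length := List.idxOf_lt_length_iff.2 ha
  rw [p.length_support] at h; omega

/-- In a path, endpoints of an edge of the walk's subgraph are consecutive in the support. -/
lemma indexOf_adj (p : G.Walk s t) (hp : p.IsPath) {a b : V}
    (h : p.toSubgraph.Adj a b) :
    p.support.idxOf a + 1 = p.support.idxOf b ∨
      p.support.idxOf b + 1 = p.support.idxOf a := by
  obtain ⟨k, hs, hk⟩ := (p.toSubgraph_adj_iff).1 h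
  rw [Sym2.eq_iff] at hs
  rcases hs with ⟨h1, h2⟩ | ⟨h1, h2⟩
  · left
    rw [← h1, ← h2, p.indexOf_getVert hp (by omega), p.indexOf_getVert hp (by omega)]
  · right
    rw [← h1, ← h2, p.indexOf_getVert hp (by omega), p.indexOf_getVert hp (by omega)]

lemma getVert_append_left {s a t : V} (q1 : G.Walk s a) (q2 : G.Walk a t) {k : ℕ}
    (hk : k ≤ q1.length) : (q1.append q2).getVert k = q1.getVert k := by
  rw [SimpleGraph.Walk.getVert_append]
  split_ifs with h
  · rfl
  · have : k = q1.length := by omega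
    subst this
    simp [SimpleGraph.Walk.getVert_length]

lemma getVert_append_right {s a t : V} (q1 : G.Walk s a) (q2 : G.Walk a t) (k : ℕ) :
    (q1.append q2).getVert (q1.length + k) = q2.getVert k := by
  rw [SimpleGraph.Walk.getVert_append]
  split_ifs with h
  · omega
  · congr 1
    omega

lemma length_takeUntil' (p : G.Walk s t) (hp : p.IsPath) {a : V} (ha : a ∈ p.support) :
    (p.takeUntil a ha).length = p.support.idxOf a := by
  set q1 := p.takeUntil a ha with hq1
  set q2 := p.dropUntil a ha with hq2
  have hsp : q1.append q2 = p := p.take_spec ha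
  have hlen : q1.length + q2.length = p.length := by
    rw [← hsp, SimpleGraph.Walk.length_append]
  have hg : p.getVert q1.length = a := by
    rw [← hsp, q1.getVert_append_left q2 le_rfl, SimpleGraph.Walk.getVert_length]
  have h2 := p.indexOf_getVert hp (k := q1.length) (by omega)
  rw [hg] at h2
  exact h2.symm

lemma mem_support_takeUntil_iff (p : G.Walk s t) (hp : p.IsPath) {a x : V}
    (ha : a ∈ p.support) :
    x ∈ (p.takeUntil a ha).support ↔
      x ∈ p.support ∧ p.support.idxOf x ≤ p.support.idxOf a := by
  set q1 := p.takeUntil a ha with hq1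
  set q2 := p.dropUntil a ha with hq2
  have hsp : q1.append q2 = p := p.take_spec ha
  have hlen : q1.length + q2.length = p.length := by
    rw [← hsp, SimpleGraph.Walk.length_append]
  have hl1 : q1.length = p.support.idxOf a := p.length_takeUntil' hp ha
  have key : ∀ k, k ≤ q1.length → p.getVert k = q1.getVert k := by
    intro k hk
    rw [← hsp, q1.getVert_append_left q2 hk]
  constructor
  · intro hx
    obtain ⟨k, hkx, hk⟩ := (SimpleGraph.Walk.mem_support_iff_exists_getVert (p := q1)).1 hx
    have hpk : p.getVert k = x := by rw [key k hk, hkx]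
    have hxL : x ∈ p.support := (SimpleGraph.Walk.mem_support_iff_exists_getVert (p := p)).2 ⟨k, hpk, by omega⟩
    have : p.support.idxOf x = k := by rw [← hpk, p.indexOf_getVert hp (by omega)]
    exact ⟨hxL, by omega⟩
  · rintro ⟨hxL, hle⟩
    have hg : p.getVert (p.support.idxOf x) = x := p.getVert_indexOf hxL
    have : q1.getVert (p.support.idxOf x) = x := by
      rw [← key _ (by omega), hg]
    exact (SimpleGraph.Walk.mem_support_iff_exists_getVert (p := q1)).2 ⟨_, this, by omega⟩

lemma mem_support_dropUntil_iff (p : G.Walk s t) (hp : p.IsPath) {a x : V}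
    (ha : a ∈ p.support) :
    x ∈ (p.dropUntil a ha).support ↔
      x ∈ p.support ∧ p.support.idxOf a ≤ p.support.idxOf x := by
  set q1 := p.takeUntil a ha with hq1
  set q2 := p.dropUntil a ha with hq2
  have hsp : q1.append q2 = p := p.take_spec ha
  have hlen : q1.length + q2.length = p.length := by
    rw [← hsp, SimpleGraph.Walk.length_append]
  have hl1 : q1.length = p.support.idxOf a := p.length_takeUntil' hp ha
  have key : ∀ k, p.getVert (q1.length + k) = q2.getVert k := by
    intro k
    rw [← hsp, q1.getVert_append_right q2 k]
  constructor
  · intro hx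
    obtain ⟨k, hkx, hk⟩ := (SimpleGraph.Walk.mem_support_iff_exists_getVert (p := q2)).1 hx
    have hpk : p.getVert (q1.length + k) = x := by rw [key k, hkx]
    have hxL : x ∈ p.support := (SimpleGraph.Walk.mem_support_iff_exists_getVert (p := p)).2 ⟨_, hpk, by omega⟩
    have : p.support.idxOf x = q1.length + k := by
      rw [← hpk, p.indexOf_getVert hp (by omega)]
    exact ⟨hxL, by omega⟩
  · rintro ⟨hxL, hle⟩
    have hg : p.getVert (p.support.idxOf x) = x := p.getVert_indexOf hxL
    have hxle : p.support.idxOf x ≤ p.length := p.indexOf_mem_le_length hxL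
    have : q2.getVert (p.support.idxOf x - q1.length) = x := by
      rw [← key _]
      rw [show q1.length + (p.support.idxOf x - q1.length) = p.support.idxOf x by omega, hg]
    exact (SimpleGraph.Walk.mem_support_iff_exists_getVert (p := q2)).2 ⟨_, this, by omega⟩

end SimpleGraph.Walk

variable [Fintype V] [DecidableEq V] [DecidableRel G.Adj]

lemma mem_nbhd {S : Finset V} {x : V} :
    x ∈ nbhd G S ↔ x ∈ S ∨ ∃ a ∈ S, G.Adj a x := by
  simp [nbhd]

lemma nbhd_mono {S T : Finset V} (h : S ⊆ T) : nbhd G S ⊆ nbhd G T := by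
  intro x hx
  rcases mem_nbhd.1 hx with h1 | ⟨a, ha, hadj⟩
  · exact mem_nbhd.2 (Or.inl (h h1))
  · exact mem_nbhd.2 (Or.inr ⟨a, h ha, hadj⟩)

end Helpers

theorem aux_close {V : Type*} [Fintype V] [DecidableEq V]
    (G : SimpleGraph V) [DecidableRel G.Adj]
    {s t : V} (p : G.Walk s t) (hp : p.IsPath)
    (hopt : ∀ q : G.Walk s t, q.IsPath → wcost G p ≤ wcost G q)
    (hshort : ∀ u v : V, u ∈ p.support → v ∈ p.support → G.Adj u v →
      p.toSubgraph.Adj u v)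
    {u v w : V} (hu : u ∈ p.support) (hv : v ∈ p.support)
    (hw1 : G.Adj u w) (hw2 : G.Adj v w)
    (hij : p.support.idxOf u ≤ p.support.idxOf v) :
    p.support.idxOf v ≤ p.support.idxOf u + G.maxDegree + 1 := by
  classical
  have hΔ1 : 1 ≤ G.maxDegree := by
    have h0 : 0 < G.degree u := (G.degree_pos_iff_exists_adj u).2 ⟨w, hw1⟩
    exact le_trans h0 (G.degree_le_maxDegree u)
  by_cases hd2 : p.support.idxOf v ≤ p.support.idxOf u + 2
  · omega
  push_neg at hd2
  have hin : p.support.idxOf u ≤ p.length := p.indexOf_mem_le_length hu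
  have hjn : p.support.idxOf v ≤ p.length := p.indexOf_mem_le_length hv
  by_cases hwL : w ∈ p.support
  · have h1 := p.indexOf_adj hp (hshort u w hu hwL hw1)
    have h2 := p.indexOf_adj hp (hshort v w hv hwL hw2)
    omega
  · -- main exchange argument
    have huv : u ≠ v := by
      intro h
      rw [h] at hd2
      omega
    set t1 := p.takeUntil u hu with ht1
    set t2 := p.dropUntil v hv with ht2
    have ht1mem : ∀ x, x ∈ t1.support ↔
        x ∈ p.support ∧ p.support.idxOf x ≤ p.support.idxOf u :=
      fun x => p.mem_support_takeUntil_iff hp hu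
    have ht2mem : ∀ x, x ∈ t2.support ↔
        x ∈ p.support ∧ p.support.idxOf v ≤ p.support.idxOf x :=
      fun x => p.mem_support_dropUntil_iff hp hv
    set q : G.Walk s t := t1.append (SimpleGraph.Walk.cons hw1
      (SimpleGraph.Walk.cons hw2.symm t2)) with hq
    have hqsupp : q.support = t1.support ++ (w :: t2.support) := by
      rw [hq, SimpleGraph.Walk.support_append]
      simp
    have hq_path : q.IsPath := by
      rw [SimpleGraph.Walk.isPath_def, hqsupp, List.nodup_append]
      refine ⟨(hp.takeUntil hu).support_nodup, ?_, ?_⟩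
      · rw [List.nodup_cons]
        exact ⟨fun hc => hwL ((ht2mem w).1 hc).1, (hp.dropUntil hv).support_nodup⟩
      · intro x hx1 y hx2 hxy; subst hxy
        rcases List.mem_cons.1 hx2 with rfl | hx2
        · exact hwL ((ht1mem x).1 hx1).1
        · have h1 := (ht1mem x).1 hx1
          have h2 := (ht2mem x).1 hx2
          omega
    set A : Finset V := p.support.toFinset.filter
      (fun a => p.support.idxOf a ≤ p.support.idxOf u ∨
        p.support.idxOf v ≤ p.support.idxOf a) with hA
    have hqA : q.support.toFinset = A ∪ {w} := by
      ext x
      rw [List.mem_toFinset, hqsupp, List.mem_append, List.mem_cons, Finset.mem_union,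
        Finset.mem_singleton, hA, Finset.mem_filter, List.mem_toFinset]
      constructor
      · rintro (hx | rfl | hx)
        · exact Or.inl ⟨((ht1mem x).1 hx).1, Or.inl ((ht1mem x).1 hx).2⟩
        · exact Or.inr rfl
        · exact Or.inl ⟨((ht2mem x).1 hx).1, Or.inr ((ht2mem x).1 hx).2⟩
      · rintro (⟨hxL, hcase | hcase⟩ | rfl)
        · exact Or.inl ((ht1mem x).2 ⟨hxL, hcase⟩)
        · exact Or.inr (Or.inr ((ht2mem x).2 ⟨hxL, hcase⟩))
        · exact Or.inr (Or.inl rfl)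
    set B : Finset V := (Finset.Icc (p.support.idxOf u + 2) (p.support.idxOf v - 2)).image
      p.getVert with hB
    have hBcard : B.card = p.support.idxOf v - p.support.idxOf u - 3 := by
      rw [hB, Finset.card_image_of_injOn, Nat.card_Icc]
      · omega
      · intro k1 hk1 k2 hk2 hkk
        rw [Finset.mem_coe, Finset.mem_Icc] at hk1 hk2
        have e1 : p.support.idxOf (p.getVert k1) = k1 := p.indexOf_getVert hp (by omega)
        have e2 : p.support.idxOf (p.getVert k2) = k2 := p.indexOf_getVert hp (by omega)
        rw [hkk] at e1
        omega
    have hdisj : Disjoint (nbhd G A) B := by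
      rw [Finset.disjoint_right]
      intro x hxB hxN
      obtain ⟨k, hk, hkx⟩ := Finset.mem_image.1 hxB
      rw [Finset.mem_Icc] at hk
      have hkn : k ≤ p.length := by omega
      have hxL : x ∈ p.support := (SimpleGraph.Walk.mem_support_iff_exists_getVert (p := p)).2 ⟨k, hkx, hkn⟩
      have hidx : p.support.idxOf x = k := by
        rw [← hkx]; exact p.indexOf_getVert hp hkn
      rcases mem_nbhd.1 hxN with hxA | ⟨a, haA, hadj⟩
      · rw [hA, Finset.mem_filter] at hxA
        omega
      · rw [hA, Finset.mem_filter, List.mem_toFinset] at haA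
        have := p.indexOf_adj hp (hshort a x haA.1 hxL hadj)
        omega
    have hBsub : B ⊆ nbhd G p.support.toFinset := by
      intro x hxB
      obtain ⟨k, hk, hkx⟩ := Finset.mem_image.1 hxB
      rw [Finset.mem_Icc] at hk
      exact mem_nbhd.2 (Or.inl (List.mem_toFinset.2
        ((SimpleGraph.Walk.mem_support_iff_exists_getVert (p := p)).2 ⟨k, hkx, by omega⟩)))
    have hAsub : nbhd G A ⊆ nbhd G p.support.toFinset := nbhd_mono (Finset.filter_subset _ _)
    have hlow : (nbhd G A).card + (p.support.idxOf v - p.support.idxOf u - 3)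
        ≤ wcost G p := by
      rw [← hBcard, ← Finset.card_union_of_disjoint hdisj]
      exact Finset.card_le_card (Finset.union_subset hAsub hBsub)
    have huA : u ∈ A := Finset.mem_filter.2 ⟨List.mem_toFinset.2 hu, Or.inl le_rfl⟩
    have hvA : v ∈ A := Finset.mem_filter.2 ⟨List.mem_toFinset.2 hv, Or.inr le_rfl⟩
    set E : Finset V := ((G.neighborFinset w).erase u).erase v with hE
    have hup : nbhd G (A ∪ {w}) ⊆ nbhd G A ∪ E := by
      intro x hx
      rcases mem_nbhd.1 hx with hx1 | ⟨a, ha, hadj⟩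
      · rcases Finset.mem_union.1 hx1 with hx1 | hx1
        · exact Finset.mem_union_left _ (mem_nbhd.2 (Or.inl hx1))
        · rw [Finset.mem_singleton] at hx1
          rw [hx1]
          exact Finset.mem_union_left _ (mem_nbhd.2 (Or.inr ⟨u, huA, hw1⟩))
      · rcases Finset.mem_union.1 ha with ha | ha
        · exact Finset.mem_union_left _ (mem_nbhd.2 (Or.inr ⟨a, ha, hadj⟩))
        · rw [Finset.mem_singleton] at ha
          rw [ha] at hadj
          by_cases hxu : x = u
          · rw [hxu]; exact Finset.mem_union_left _ (mem_nbhd.2 (Or.inl huA))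
          · by_cases hxv : x = v
            · rw [hxv]; exact Finset.mem_union_left _ (mem_nbhd.2 (Or.inl hvA))
            · exact Finset.mem_union_right _ (Finset.mem_erase.2 ⟨hxv,
                Finset.mem_erase.2 ⟨hxu, (G.mem_neighborFinset w x).2 hadj⟩⟩)
    have hun : u ∈ G.neighborFinset w := (G.mem_neighborFinset w u).2 hw1.symm
    have hvE : v ∈ (G.neighborFinset w).erase u :=
      Finset.mem_erase.2 ⟨huv.symm, (G.mem_neighborFinset w v).2 hw2.symm⟩
    have hN2 : 2 ≤ (G.neighborFinset w).card := by
      rw [Nat.succ_le_iff]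
      exact Finset.one_lt_card.2 ⟨u, hun, v, Finset.mem_of_mem_erase hvE, huv⟩
    have hEcard : E.card + 2 = G.degree w := by
      rw [hE, Finset.card_erase_of_mem hvE, Finset.card_erase_of_mem hun]
      show (G.neighborFinset w).card - 1 - 1 + 2 = (G.neighborFinset w).card
      omega
    have hqcost : wcost G q ≤ (nbhd G A).card + E.card := by
      have hw : wcost G q = (nbhd G (A ∪ {w})).card := by
        unfold wcost
        rw [hqA]
      rw [hw]
      exact le_trans (Finset.card_le_card hup) (Finset.card_union_le _ _)
    have hopt' := hopt q hq_path
    have hdw : G.degree w ≤ G.maxDegree := G.degree_le_maxDegree w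
    omega

/-- In a graph of maximum degree `Δ`, if `P*` is an optimal (minimum-cost, shortcut-free)
`s–t` secluded path and `u, v` lie on `P*` and share a common neighbor `w` in `G`,
then the distance between `u` and `v` along `P*` is at most `Δ + 1`. -/
theorem common_neighbor_close_on_optimal_path {V : Type*} [Fintype V] [DecidableEq V]
    (G : SimpleGraph V) [DecidableRel G.Adj]
    {s t : V} (p : G.Walk s t) (hp : p.IsPath)
    (hopt : ∀ q : G.Walk s t, q.IsPath → wcost G p ≤ wcost G q)
    (hshortcutfree : ∀ u v : V, u ∈ p.support → v ∈ p.support → G.Adj u v →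
      p.toSubgraph.Adj u v)
    {u v w : V} (hu : u ∈ p.support) (hv : v ∈ p.support)
    (hw1 : G.Adj u w) (hw2 : G.Adj v w) :
    ((p.support.idxOf u : ℤ) - (p.support.idxOf v : ℤ)).natAbs ≤ G.maxDegree + 1 := by
  rcases le_total (p.support.idxOf u) (p.support.idxOf v) with h | h
  · have := aux_close G p hp hopt hshortcutfree hu hv hw1 hw2 h
    omega
  · have := aux_close G p hp hopt hshortcutfree hv hu hw2 hw1 h
    omega
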